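/- Let α be a random variable uniformly distributed on [0, 2π] and fix ε ∈ (0, 1/2). Then the chance-constrained set {u ∈ ℝ² : P{ cos(α)·u₁ + sin(α)·u₂ ≤ 1 } ≥ 1 − ε} equals the closed Euclidean ball {u ∈ ℝ² : ‖u‖ ≤ 1/cos(επ)} centered at the origin of radius 1/cos(επ). -/

import Mathlib

open MeasureTheory Real

section Aux
open Set

lemma periodic_measure_Ioc {A : Set ℝ} (hA : MeasurableSet A) {T : ℝ} (hT : 0 < T)
    (hper : ∀ x, x + T ∈ A ↔ x ∈ A) (s t : ℝ) :
    volume (A ∩ Set.Ioc s (s + T)) = volume (A ∩ Set.Ioc t (t + T)) := by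
  haveI : VAddInvariantMeasure (AddSubgroup.zmultiples T) ℝ volume :=
    ⟨fun c s _ => measure_preimage_add _ _ _⟩
  refine (isAddFundamentalDomain_Ioc hT s).measure_set_eq
    (isAddFundamentalDomain_Ioc hT t) hA ?_
  intro g
  have hp : Function.Periodic (fun x => x ∈ A) T := fun x => propext (hper x)
  obtain ⟨n, hn⟩ := g.2
  ext x
  have key : (x + (g : ℝ) ∈ A) = (x ∈ A) := (hp.zsmul n) x ▸ by rw [← hn]
  show (g : ℝ) + x ∈ A ↔ x ∈ A
  rw [add_comm]
  exact iff_of_eq key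

lemma cos_gt_iff {β c : ℝ} (hc : c ∈ Set.Ioo (0:ℝ) 1) (hβ : β ∈ Set.Ioc (-π) π) :
    c < Real.cos β ↔ |β| < Real.arccos c := by
  have h1 : Real.cos (Real.arccos c) = c := Real.cos_arccos (by linarith [hc.1]) hc.2.le
  have hb : |β| ∈ Set.Icc (0:ℝ) π := ⟨abs_nonneg _, abs_le.mpr ⟨hβ.1.le, hβ.2⟩⟩
  have ha : Real.arccos c ∈ Set.Icc (0:ℝ) π := ⟨Real.arccos_nonneg c, Real.arccos_le_pi c⟩
  conv_lhs => rw [← h1]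
  rw [← Real.cos_abs β]
  exact Real.strictAntiOn_cos.lt_iff_gt ha hb

lemma measure_cos_le (θ c : ℝ) (hc : c ∈ Set.Ioo (0:ℝ) 1) :
    volume ({α : ℝ | Real.cos (α - θ) ≤ c} ∩ Set.Ioc 0 (2*π)) =
      ENNReal.ofReal (2*π - 2*Real.arccos c) := by
  set a := Real.arccos c with ha_def
  have hpi := Real.pi_pos
  have ha0 : 0 < a := Real.arccos_pos.mpr hc.2
  have ha2 : a < π/2 := Real.arccos_lt_pi_div_two.mpr hc.1
  have hmeas : MeasurableSet {α : ℝ | Real.cos (α - θ) ≤ c} := by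
    apply measurableSet_le <;> fun_prop
  have h20 : (0:ℝ) + 2*π = 2*π := by ring
  have hper : ∀ x : ℝ, x + 2*π ∈ {α : ℝ | Real.cos (α - θ) ≤ c} ↔
      x ∈ {α : ℝ | Real.cos (α - θ) ≤ c} := by
    intro x
    simp only [Set.mem_setOf_eq]
    rw [show x + 2*π - θ = (x - θ) + 2*π by ring, Real.cos_add_two_pi]
  calc volume ({α : ℝ | Real.cos (α - θ) ≤ c} ∩ Set.Ioc 0 (2*π))
      = volume ({α : ℝ | Real.cos (α - θ) ≤ c} ∩ Set.Ioc (θ-π) ((θ-π) + 2*π)) := by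
        nth_rewrite 1 [show (2:ℝ)*π = 0 + 2*π from (zero_add _).symm]
        exact periodic_measure_Ioc hmeas (by positivity) hper 0 (θ-π)
    _ = volume (Set.Ioc (θ-π) (θ-a) ∪ Set.Icc (θ+a) (θ+π)) := by
        congr 1
        ext α
        simp only [Set.mem_inter_iff, Set.mem_setOf_eq, Set.mem_Ioc, Set.mem_union, Set.mem_Icc]
        constructor
        · rintro ⟨h1, h2, h3⟩
          have hβ : α - θ ∈ Set.Ioc (-π) π := ⟨by linarith, by linarith⟩
          have : ¬ |α - θ| < a := fun h =>
            absurd ((cos_gt_iff hc hβ).mpr h) (not_lt.mpr h1)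
          rcases le_abs.mp (not_lt.mp this) with h | h
          · right; constructor <;> linarith
          · left; constructor <;> linarith
        · rintro (⟨h1, h2⟩ | ⟨h1, h2⟩) <;>
          · have hβ : α - θ ∈ Set.Ioc (-π) π := ⟨by linarith, by linarith⟩
            have habs : ¬ |α - θ| < a := by
              rw [not_lt, le_abs]
              first
                | (right; linarith)
                | (left; linarith)
            refine ⟨not_lt.mp (fun h => habs ((cos_gt_iff hc hβ).mp h)), by linarith, by linarith⟩
    _ = ENNReal.ofReal (2*π - 2*a) := by
        rw [measure_union (by
          apply Set.disjoint_left.mpr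
          rintro x ⟨-, hx2⟩ ⟨hx3, -⟩
          linarith) measurableSet_Icc]
        rw [Real.volume_Ioc, Real.volume_Icc, ← ENNReal.ofReal_add (by linarith) (by linarith)]
        congr 1
        ring

end Aux

set_option maxHeartbeats 1000000 in
/-- for `α` uniform on `[0, 2π]` and `ε ∈ (0, 1/2)`, the chance-constrained
set `{u ∈ ℝ² : P{cos(α)u₁ + sin(α)u₂ ≤ 1} ≥ 1 − ε}` is the closed ball of radius
`1/cos(επ)` centered at the origin. -/
theorem chance_constraint_uniform_angle_eq_ball
    (ε : ℝ) (hε : ε ∈ Set.Ioo (0 : ℝ) (1 / 2)) :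
    {u : EuclideanSpace ℝ (Fin 2) |
        ((ENNReal.ofReal (2 * π))⁻¹ • volume.restrict (Set.Icc (0 : ℝ) (2 * π)))
            {α : ℝ | Real.cos α * u 0 + Real.sin α * u 1 ≤ 1} ≥
          ENNReal.ofReal (1 - ε)} =
      Metric.closedBall (0 : EuclideanSpace ℝ (Fin 2)) (1 / Real.cos (ε * π)) := by
  obtain ⟨hε0, hε2⟩ := hε
  have hpi := Real.pi_pos
  have hεπ : ε * π < π / 2 := by nlinarith
  have hcos : 0 < Real.cos (ε * π) := Real.cos_pos_of_mem_Ioo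
    ⟨by nlinarith, hεπ⟩
  have hcos1 : Real.cos (ε * π) ≤ 1 := Real.cos_le_one _
  ext u
  simp only [Set.mem_setOf_eq, Metric.mem_closedBall, dist_zero_right, ge_iff_le,
    Measure.smul_apply, smul_eq_mul]
  have hnorm : ‖u‖ = Real.sqrt ((u 0)^2 + (u 1)^2) := by
    rw [EuclideanSpace.norm_eq]
    simp [Fin.sum_univ_two, sq_abs, Real.norm_eq_abs]
  have hr0 : (0:ℝ) ≤ ‖u‖ := norm_nonneg u
  have hr2 : ‖u‖^2 = (u 0)^2 + (u 1)^2 := by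
    rw [hnorm]; exact Real.sq_sqrt (by positivity)
  by_cases hr : ‖u‖ ≤ 1
  · have hset : {α : ℝ | Real.cos α * u 0 + Real.sin α * u 1 ≤ 1} = Set.univ := by
      ext α
      simp only [Set.mem_setOf_eq, Set.mem_univ, iff_true]
      nlinarith [Real.sin_sq_add_cos_sq α, sq_nonneg (Real.cos α * u 1 - Real.sin α * u 0),
        sq_nonneg (Real.cos α * u 0 + Real.sin α * u 1 - 1),
        sq_nonneg (Real.cos α * u 0 + Real.sin α * u 1 + 1)]
    rw [hset, Measure.restrict_apply_univ, Real.volume_Icc,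
      show 2*π - 0 = 2*π by ring,
      ENNReal.inv_mul_cancel (by positivity) ENNReal.ofReal_ne_top]
    have h1 : ENNReal.ofReal (1 - ε) ≤ 1 := ENNReal.ofReal_le_one.mpr (by linarith)
    have h2 : ‖u‖ ≤ 1 / Real.cos (ε * π) := by
      rw [le_div_iff₀ hcos]; nlinarith
    rw [one_div] at h2
    simp [h1, h2]
  · push_neg at hr
    have hrpos : (0:ℝ) < ‖u‖ := by linarith
    set r := ‖u‖ with hr_def
    set z : ℂ := ⟨u 0, u 1⟩ with hz_def
    have habs : ‖z‖ = r := by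
      rw [Complex.norm_def, Complex.normSq_mk, hnorm]
      congr 1; ring
    have hz0 : z ≠ 0 := by
      intro h; rw [h, norm_zero] at habs; linarith
    set θ := Complex.arg z with hθ_def
    have hx : u 0 = r * Real.cos θ := by
      rw [Complex.cos_arg hz0, habs]
      show u 0 = r * (z.re / r)
      field_simp [hz_def]
      rfl
    have hy : u 1 = r * Real.sin θ := by
      rw [Complex.sin_arg, habs]
      show u 1 = r * (z.im / r)
      field_simp [hz_def]
      rfl
    have hc : 1/r ∈ Set.Ioo (0:ℝ) 1 :=
      ⟨by positivity, (div_lt_one hrpos).mpr hr⟩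
    set a := Real.arccos (1/r) with ha_def
    have ha0 : 0 ≤ a := Real.arccos_nonneg _
    have ha2 : a < π/2 := Real.arccos_lt_pi_div_two.mpr hc.1
    have hca : Real.cos a = 1/r := Real.cos_arccos (by linarith [hc.1]) hc.2.le
    have hset : {α : ℝ | Real.cos α * u 0 + Real.sin α * u 1 ≤ 1}
        = {α : ℝ | Real.cos (α - θ) ≤ 1/r} := by
      ext α
      simp only [Set.mem_setOf_eq]
      rw [Real.cos_sub, le_div_iff₀ hrpos, hx, hy]
      constructor <;> intro h <;> nlinarith
    have hmeas : MeasurableSet {α : ℝ | Real.cos (α - θ) ≤ 1/r} := by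
      apply measurableSet_le <;> fun_prop
    have hμ : volume.restrict (Set.Icc (0:ℝ) (2*π)) {α : ℝ | Real.cos (α - θ) ≤ 1/r}
        = ENNReal.ofReal (2*π - 2*a) := by
      rw [Measure.restrict_apply hmeas]
      rw [measure_congr (ae_eq_set_inter (Filter.EventuallyEq.refl (ae volume) {α : ℝ | Real.cos (α - θ) ≤ 1/r})
        (MeasureTheory.Ioc_ae_eq_Icc (μ := volume) (a := (0:ℝ)) (b := 2*π)).symm)]
      exact measure_cos_le θ (1/r) hc
    rw [hset, hμ]
    have hrw : (ENNReal.ofReal (2*π))⁻¹ * ENNReal.ofReal (2*π - 2*a)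
        = ENNReal.ofReal ((2*π - 2*a)/(2*π)) := by
      rw [ENNReal.ofReal_div_of_pos (by positivity), ENNReal.div_eq_inv_mul]
    rw [hrw, ENNReal.ofReal_le_ofReal_iff (div_nonneg (by linarith) (by positivity))]
    rw [le_div_iff₀ (by positivity : (0:ℝ) < 2*π)]
    have expand : (1-ε)*(2*π) = 2*π - 2*(ε*π) := by ring
    rw [expand]
    constructor
    · intro h
      have haε : a ≤ ε * π := by linarith
      have : Real.cos (ε * π) ≤ Real.cos a :=
        Real.cos_le_cos_of_nonneg_of_le_pi ha0 (by linarith) haε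
      rw [hca] at this
      rw [le_div_iff₀ hcos]
      calc r * Real.cos (ε*π) ≤ r * (1/r) :=
            mul_le_mul_of_nonneg_left this hrpos.le
        _ = 1 := by field_simp
    · intro h
      have h1 : Real.cos (ε * π) ≤ 1/r := by
        rw [le_div_iff₀ hrpos]
        rw [le_div_iff₀ hcos] at h
        linear_combination h
      have haε : a ≤ ε * π := by
        by_contra hlt
        push_neg at hlt
        have := Real.cos_lt_cos_of_nonneg_of_le_pi (by positivity) (by linarith) hlt
        rw [hca] at this
        linarith
      linarith
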